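/- C(1) = 1; that is, ∏_{p prime, p > 2}(1 − 1/(p−1)^2) · ∏_{p prime}(1 + f_1(p)) = 1. -/

import Mathlib

open scoped BigOperators Classical

noncomputable section

/-- Number of points (including the point at infinity) of the curve
`y² = x³ + s·x + t` over `ZMod p`. -/
def curvePoints (p : ℕ) (s t : ZMod p) : ℕ :=
  1 + Nat.card {xy : ZMod p × ZMod p // xy.2 ^ 2 = xy.1 ^ 3 + s * xy.1 + t}

/-- `M_{E_{a,b}}(N)`: the number of primes `p > 3` of good reduction such that the reduction
of `E_{a,b}` mod `p` has exactly `N` points. -/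
def ME (a b : ℤ) (N : ℕ) : ℕ :=
  Nat.card {p : ℕ // p.Prime ∧ 3 < p ∧ ¬ ((p : ℤ) ∣ (4 * a ^ 3 + 27 * b ^ 2)) ∧
    curvePoints p (a : ZMod p) (b : ZMod p) = N}

/-- The family `C(A,B)` of integral pairs `(a,b)` with `|a| ≤ A`, `|b| ≤ B`,
`4a³ + 27b² ≠ 0`. -/
def curveBox (A B : ℝ) : Finset (ℤ × ℤ) :=
  (Finset.Icc ⌈-A⌉ ⌊A⌋ ×ˢ Finset.Icc ⌈-B⌉ ⌊B⌋).filter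
    fun ab => 4 * ab.1 ^ 3 + 27 * ab.2 ^ 2 ≠ 0

/-- The weighted class number `H_N(p)`. -/
def HN (N p : ℕ) : ℝ :=
  (Nat.card {st : ZMod p × ZMod p // 4 * st.1 ^ 3 + 27 * st.2 ^ 2 ≠ 0 ∧
    curvePoints p st.1 st.2 = N} : ℝ) / ((p : ℝ) - 1)

/-- Primes in the Hasse interval `(N⁻, N⁺) = ((√N - 1)², (√N + 1)²)`. -/
def primesRange (N : ℕ) : Set ℕ :=
  {p : ℕ | p.Prime ∧ (Real.sqrt N - 1) ^ 2 < (p : ℝ) ∧ (p : ℝ) < (Real.sqrt N + 1) ^ 2}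

/-- `ε_p(N)`: `1` if `p ∤ N - 1`, `0` if `p ∣ N - 1`. -/
def eps (p N : ℕ) : ℝ := if p ∣ (N - 1) then 0 else 1

/-- The Euler factor constant `K(N)`. -/
def Kconst (N : ℕ) : ℝ :=
  (∏' p : {p : ℕ // p.Prime ∧ ¬ p ∣ N},
    (1 - (eps (p : ℕ) N * ((p : ℕ) : ℝ) + 1) /
      ((((p : ℕ) : ℝ) - 1) ^ 2 * (((p : ℕ) : ℝ) + 1)))) *
  ∏ p ∈ N.primeFactors, (1 - 1 / ((p : ℝ) ^ (N.factorization p) * ((p : ℝ) - 1)))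

/-- The local factor `f_m(p)`. -/
def fm (m : ℕ) (p : ℕ) : ℝ :=
  if p = 2 then
    (1 / 2) * ((2 / 3 : ℝ) ^ m - 1) +
      2 ^ m * ∑' j : ℕ, (1 / 2 ^ (j + 2) : ℝ) *
        ((1 - 1 / 2 ^ (j + 2)) ^ m - (1 - 1 / 2 ^ (j + 1)) ^ m)
  else
    (1 / (p : ℝ)) *
      ((1 - 1 / ((p : ℝ) - 1) ^ 2)⁻¹ ^ m *
        ((1 - 1 / (((p : ℝ) - 1) ^ 2 * ((p : ℝ) + 1))) ^ m +
          ((p : ℝ) / ((p : ℝ) - 1)) ^ m * (1 - 1 / ((p : ℝ) * ((p : ℝ) - 1))) ^ m) - 2) +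
    ((p : ℝ) / ((p : ℝ) - 1)) ^ m * ((1 - 1 / ((p : ℝ) - 1) ^ 2)⁻¹) ^ m *
      ∑' j : ℕ, (1 / (p : ℝ) ^ (j + 2)) *
        ((1 - 1 / ((p : ℝ) ^ (j + 2) * ((p : ℝ) - 1))) ^ m -
         (1 - 1 / ((p : ℝ) ^ (j + 1) * ((p : ℝ) - 1))) ^ m)

/-- The constant `C(m)`. -/
def Cconst (m : ℕ) : ℝ :=
  (∏' p : {p : ℕ // p.Prime ∧ 2 < p}, (1 - 1 / (((p : ℕ) : ℝ) - 1) ^ 2) ^ m) *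
  ∏' p : {p : ℕ // p.Prime}, (1 + fm m (p : ℕ))

/-- The combinatorial coefficients `d_{ℓ,r}(m)`. -/
def dconst (l r m : ℕ) : ℝ :=
  ∑ k ∈ Finset.Icc l m, ((k : ℝ) ^ r / k.factorial) * ((-1 : ℝ) ^ (m - k) / (m - k).factorial)

/-- The logarithmic integral `Li_m(x) = ∫_2^x dt/(log t)^m`. -/
def Li (m : ℕ) (x : ℝ) : ℝ := ∫ t in (2 : ℝ)..x, 1 / (Real.log t) ^ m

/-- Chebyshev `θ(x; q, a)` for primes in an arithmetic progression. -/
def theta (x : ℝ) (q a : ℕ) : ℝ :=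
  ∑ᶠ p ∈ {p : ℕ | p.Prime ∧ (p : ℝ) ≤ x ∧ p % q = a % q}, Real.log p

/-- The Barban–Davenport–Halberstam hypothesis `BDH(η, β)`. -/
def BDH (η β : ℝ) : Prop :=
  ∃ c : ℝ, ∀ X Y Q : ℝ, 0 < X → 0 < Y → 0 < Q →
    X ^ η ≤ Y → Y ≤ X → Y / Real.log X ^ β ≤ Q → Q ≤ Y →
    ∑ q ∈ Finset.Icc 1 ⌊Q⌋₊, ∑ a ∈ (Finset.Icc 1 q).filter (fun a => Nat.gcd a q = 1),
      |theta (X + Y) q a - theta X q a - Y / (Nat.totient q : ℝ)| ^ 2 ≤ c * Y * Q * Real.log X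

end

theorem tsum_aux (x : ℝ) (hx : 3 ≤ x) :
    ∑' j : ℕ, (1 / x ^ (j + 2)) *
        ((1 - 1 / (x ^ (j + 2) * (x - 1))) - (1 - 1 / (x ^ (j + 1) * (x - 1))))
      = 1 / (x ^ 2 * (x ^ 2 - 1)) := by
  have hx0 : (0:ℝ) < x := by linarith
  have hx0' : x ≠ 0 := ne_of_gt hx0
  have hx1 : x - 1 ≠ 0 := by nlinarith
  have hsq : (1:ℝ)/x^2 < 1 := by
    rw [div_lt_one (by positivity)]; nlinarith
  have hterm : ∀ j : ℕ, (1 / x ^ (j + 2)) *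
        ((1 - 1 / (x ^ (j + 2) * (x - 1))) - (1 - 1 / (x ^ (j + 1) * (x - 1))))
      = (1 / x ^ 4) * (1 / x ^ 2) ^ j := by
    intro j
    have hy : x ^ j ≠ 0 := pow_ne_zero _ hx0'
    rw [pow_add, pow_add, div_pow, one_pow, ← pow_mul, mul_comm 2 j, pow_mul]
    field_simp
    ring
  rw [tsum_congr hterm, tsum_mul_left, tsum_geometric_of_lt_one (by positivity) hsq]
  have h2 : x^2 - 1 ≠ 0 := by nlinarith
  rw [eq_div_iff (by positivity)]
  field_simp

theorem key_identity (p : ℕ) (hp : p.Prime) (hp2 : 2 < p) :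
    (1 - 1 / ((p : ℝ) - 1) ^ 2) * (1 + fm 1 p) = 1 := by
  have hx : (3:ℝ) ≤ (p:ℝ) := by exact_mod_cast hp2
  have hne : p ≠ 2 := by omega
  rw [fm, if_neg hne]
  simp only [pow_one]
  rw [tsum_aux (p:ℝ) hx]
  set x : ℝ := (p:ℝ) with hxdef
  have hx1 : x - 1 ≠ 0 := by nlinarith
  have hx0 : x ≠ 0 := by nlinarith
  have hxp1 : x + 1 ≠ 0 := by nlinarith
  have hg : 1 - 1/(x-1)^2 ≠ 0 := by
    have h4 : (4:ℝ) ≤ (x-1)^2 := by nlinarith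
    have : 1/(x-1)^2 < 1 := by rw [div_lt_one (by nlinarith)]; nlinarith
    nlinarith
  have hx2 : x^2 - 1 ≠ 0 := by nlinarith
  have hs1 : (x-1)^2 - 1 ≠ 0 := by nlinarith
  have hinv : (1 - 1/(x-1)^2)⁻¹ = (x-1)^2 / ((x-1)^2 - 1) := by
    rw [eq_div_iff hs1, inv_mul_eq_div, div_eq_iff hg]
    field_simp
  rw [hinv]
  field_simp
  ring

theorem fm_one_two : fm 1 2 = 0 := by
  rw [fm, if_pos rfl]
  simp only [pow_one]
  have hterm : ∀ j : ℕ, (1 / 2 ^ (j + 2) : ℝ) *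
      ((1 - 1 / 2 ^ (j + 2)) - (1 - 1 / 2 ^ (j + 1)))
      = (1 / 16) * (1 / 4 : ℝ) ^ j := by
    intro j
    have hy : (2:ℝ) ^ j ≠ 0 := pow_ne_zero _ two_ne_zero
    have h4 : (4:ℝ) ^ j = 2 ^ j * 2 ^ j := by
      rw [show (4:ℝ) = 2 * 2 by norm_num, mul_pow]
    rw [pow_add, pow_add, div_pow, one_pow, h4]
    field_simp
    ring
  rw [tsum_congr hterm, tsum_mul_left,
    tsum_geometric_of_lt_one (by norm_num) (by norm_num : (1/4:ℝ) < 1)]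
  norm_num

noncomputable section AuxCW

def gS (q : {p : ℕ // p.Prime ∧ 2 < p}) : ℝ := 1 - 1 / ((q.1 : ℝ) - 1) ^ 2

def hS (q : {p : ℕ // p.Prime ∧ 2 < p}) : ℝ := 1 + fm 1 q.1

theorem gS_bounds (q : {p : ℕ // p.Prime ∧ 2 < p}) :
    3/4 ≤ gS q ∧ gS q ≤ 1 := by
  have hx : (3:ℝ) ≤ (q.1:ℝ) := by exact_mod_cast q.2.2
  have h4 : (4:ℝ) ≤ ((q.1:ℝ) - 1)^2 := by nlinarith
  have ha : 1 / ((q.1:ℝ) - 1)^2 ≤ 1/4 := by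
    rw [div_le_div_iff₀ (by nlinarith) (by norm_num)]; nlinarith
  have ha0 : 0 ≤ 1 / ((q.1:ℝ) - 1)^2 := by positivity
  constructor <;> [skip; skip] <;> unfold gS <;> linarith

theorem hS_eq (q : {p : ℕ // p.Prime ∧ 2 < p}) : hS q = (gS q)⁻¹ :=
  eq_inv_of_mul_eq_one_left
    (by simpa [hS, gS, mul_comm] using key_identity q.1 q.2.1 q.2.2)

theorem gS_mul_hS (q : {p : ℕ // p.Prime ∧ 2 < p}) : gS q * hS q = 1 := by
  simpa [hS, gS] using key_identity q.1 q.2.1 q.2.2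

theorem hS_bounds (q : {p : ℕ // p.Prime ∧ 2 < p}) :
    1 ≤ hS q ∧ hS q ≤ 1 + (4/3) * (1 / ((q.1:ℝ) - 1)^2) := by
  obtain ⟨hg1, hg2⟩ := gS_bounds q
  have hg0 : 0 < gS q := by linarith
  rw [hS_eq]
  constructor
  · rw [le_inv_comm₀ one_pos hg0]; simpa using hg2
  · rw [inv_le_iff_one_le_mul₀ hg0]
    have hgdef : gS q = 1 - 1 / ((q.1:ℝ) - 1)^2 := rfl
    have ha : 1 / ((q.1:ℝ) - 1)^2 ≤ 1/4 := by
      have := gS_bounds q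
      rw [hgdef] at hg1; linarith
    have ha0 : 0 ≤ 1 / ((q.1:ℝ) - 1)^2 := by positivity
    rw [hgdef]
    nlinarith

theorem majorant_summable :
    Summable (fun n : ℕ => (4/3) * (1 / ((n:ℝ) - 1)^2)) := by
  rw [← summable_nat_add_iff 2]
  have h1 : Summable (fun n : ℕ => 1 / ((n:ℝ) + 1)^2) := by
    have := (summable_nat_add_iff (f := fun n : ℕ => 1 / (n:ℝ)^2) 1).2
      ((Real.summable_one_div_nat_pow (p := 2)).2 one_lt_two)
    refine this.congr fun n => ?_
    push_cast
    ring_nf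
  refine (h1.mul_left (4/3)).congr fun n => ?_
  push_cast
  ring_nf

theorem log_hS_summable :
    Summable (fun q : {p : ℕ // p.Prime ∧ 2 < p} => Real.log (hS q)) := by
  have hsub : Summable (fun q : {p : ℕ | p.Prime ∧ 2 < p} =>
      (4/3) * (1 / (((q:ℕ):ℝ) - 1)^2)) :=
    majorant_summable.subtype {p : ℕ | p.Prime ∧ 2 < p}
  refine hsub.of_nonneg_of_le (fun q => Real.log_nonneg (hS_bounds q).1) fun q => ?_
  calc Real.log (hS q) ≤ hS q - 1 :=
        Real.log_le_sub_one_of_pos (by linarith [(hS_bounds q).1])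
    _ ≤ (4/3) * (1 / (((q:ℕ):ℝ) - 1)^2) := by linarith [(hS_bounds q).2]

theorem log_gS_summable :
    Summable (fun q : {p : ℕ // p.Prime ∧ 2 < p} => Real.log (gS q)) := by
  refine log_hS_summable.neg.congr fun q => ?_
  rw [hS_eq, Real.log_inv, neg_neg]

theorem mult_hS : Multipliable hS :=
  Real.multipliable_of_summable_log
    (fun q => by linarith [(hS_bounds q).1]) log_hS_summable

theorem mult_gS : Multipliable gS :=
  Real.multipliable_of_summable_log
    (fun q => by linarith [(gS_bounds q).1]) log_gS_summable

end AuxCW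

theorem Cconst_one : Cconst 1 = 1 := by
  rw [Cconst]
  have h1 : (∏' p : {p : ℕ // p.Prime ∧ 2 < p}, (1 - 1 / (((p : ℕ) : ℝ) - 1) ^ 2) ^ 1)
      = ∏' q, gS q := by
    simp only [pow_one]; rfl
  have h2 : (∏' p : {p : ℕ // p.Prime}, (1 + fm 1 (p : ℕ))) = ∏' q, hS q := by
    refine tprod_eq_tprod_of_ne_one_bij
      (f := fun p : {p : ℕ // p.Prime} => 1 + fm 1 (p : ℕ))
      (fun q => ⟨q.1.1, q.1.2.1⟩) ?_ ?_ ?_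
    · intro a b hab
      simp only [Subtype.mk.injEq] at hab
      exact Subtype.ext (Subtype.ext hab)
    · rintro ⟨p, hp⟩ hsupp
      have hne : fm 1 p ≠ 0 := fun h => hsupp (by simp [Function.mulSupport, h])
      have hp2 : p ≠ 2 := fun h => hne (h ▸ fm_one_two)
      have hlt : 2 < p := lt_of_le_of_ne hp.two_le (Ne.symm hp2)
      refine ⟨⟨⟨p, hp, hlt⟩, ?_⟩, rfl⟩
      simpa [hS] using fun h => hsupp (by simpa [Function.mulSupport] using h)
    · intro q
      rfl
  rw [h1, h2, ← Multipliable.tprod_mul mult_gS mult_hS]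
  calc (∏' q, gS q * hS q) = ∏' _ : {p : ℕ // p.Prime ∧ 2 < p}, (1:ℝ) :=
        tprod_congr gS_mul_hS
    _ = 1 := tprod_one
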